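/- Let α > 0 and β > 0, and for V : S → ℝ define the probability distribution p_V(s,a) = Z_V^{-1} · (Σ_b exp(A_V(s,b)/α))^{α/β − 1} · exp(A_V(s,a)/α). Then V is a critical point of the dual function V ↦ log Z_V (i.e., all partial derivatives ∂(log Z_V)/∂V(s) vanish) if and only if p_V satisfies the stationarity constraints Σ_{s,a} P(s'|s,a) p_V(s,a) = Σ_b p_V(s',b) for every s' ∈ S. -/

import Mathlib

open Finset

/-- The advantage `A_V(s,a) = r(s,a) + Σ_{s'} V(s') P(s'|s,a) − V(s)`. -/
noncomputable def Adv {S A : Type} [Fintype S]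
    (P : S → A → S → ℝ) (r : S → A → ℝ) (V : S → ℝ) (s : S) (a : A) : ℝ :=
  r s a + (∑ s', V s' * P s a s') - V s

/-- The partition function `Z_V = Σ_s (Σ_a exp(A_V(s,a)/α))^{α/β}`. -/
noncomputable def Zfun {S A : Type} [Fintype S] [Fintype A]
    (P : S → A → S → ℝ) (r : S → A → ℝ) (α β : ℝ) (V : S → ℝ) : ℝ :=
  ∑ s, (∑ a, Real.exp (Adv P r V s a / α)) ^ (α / β)

/-- `V` is a critical point of the dual function `V ↦ log Z_V`
(all partial derivatives vanish) iff the induced distribution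
`p_V(s,a) = Z_V⁻¹ (Σ_b exp(A_V(s,b)/α))^{α/β−1} exp(A_V(s,a)/α)`
satisfies the stationarity constraints. -/
theorem critical_point_iff_stationary {S A : Type} [Fintype S] [Fintype A]
    [DecidableEq S] [Nonempty S] [Nonempty A]
    (P : S → A → S → ℝ) (hP0 : ∀ s a s', 0 ≤ P s a s')
    (hP1 : ∀ s a, (∑ s', P s a s') = 1)
    (r : S → A → ℝ) (α β : ℝ) (hα : 0 < α) (hβ : 0 < β)
    (V : S → ℝ) (pV : S → A → ℝ)
    (hpV : ∀ s a, pV s a =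
      (Zfun P r α β V)⁻¹ *
        (∑ b, Real.exp (Adv P r V s b / α)) ^ (α / β - 1) *
        Real.exp (Adv P r V s a / α)) :
    ((∀ s : S,
        deriv (fun t : ℝ =>
          Real.log (Zfun P r α β (Function.update V s t))) (V s) = 0)
      ↔ (∀ s' : S, (∑ s, ∑ a, P s a s' * pV s a) = ∑ b, pV s' b)) := by
  have hEpos : ∀ (W : S → ℝ) (s : S), 0 < ∑ a, Real.exp (Adv P r W s a / α) :=
    fun W s => Finset.sum_pos (fun a _ => Real.exp_pos _) Finset.univ_nonempty
  have hZpos : ∀ W : S → ℝ, 0 < Zfun P r α β W :=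
    fun W => Finset.sum_pos (fun s _ => Real.rpow_pos_of_pos (hEpos W s) _) Finset.univ_nonempty
  have key : ∀ s₀ : S, deriv (fun t => Real.log (Zfun P r α β (Function.update V s₀ t))) (V s₀)
      = β⁻¹ * ((∑ s, ∑ a, P s a s₀ * pV s a) - ∑ b, pV s₀ b) := by
    intro s₀
    set c : S → A → ℝ := fun s a => P s a s₀ - (if s = s₀ then 1 else 0) with hc
    have hAdv : ∀ (t : ℝ) s a, Adv P r (Function.update V s₀ t) s a
        = Adv P r V s a + (t - V s₀) * c s a := by
      intro t s a
      simp only [Adv, hc, Function.update_apply]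
      have hterm : ∀ s', (if s' = s₀ then t else V s') * P s a s'
          = V s' * P s a s' + (if s' = s₀ then (t - V s₀) * P s a s' else 0) := by
        intro s'
        by_cases h : s' = s₀
        · subst h; simp; ring
        · simp [h]
      have hsum : (∑ s', (if s' = s₀ then t else V s') * P s a s')
          = (∑ s', V s' * P s a s') + (t - V s₀) * P s a s₀ := by
        rw [Finset.sum_congr rfl (fun s' _ => hterm s'), Finset.sum_add_distrib,
          Finset.sum_ite_eq' Finset.univ s₀ (fun s' => (t - V s₀) * P s a s')]
        simp
      rw [hsum]
      by_cases h : s = s₀ <;> simp [h] <;> ring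
    have hZ : HasDerivAt (fun t => Zfun P r α β (Function.update V s₀ t))
        (∑ s, ((∑ a, Real.exp (Adv P r V s a / α) * (c s a / α)) * (α/β) *
          (∑ a, Real.exp (Adv P r V s a / α)) ^ (α/β - 1))) (V s₀) := by
      unfold Zfun
      apply HasDerivAt.fun_sum
      intro s _
      have hsum : HasDerivAt (fun t => ∑ a, Real.exp (Adv P r (Function.update V s₀ t) s a / α))
          (∑ a, Real.exp (Adv P r V s a / α) * (c s a / α)) (V s₀) := by
        apply HasDerivAt.fun_sum
        intro a _
        have h1 : (fun t => Real.exp (Adv P r (Function.update V s₀ t) s a / α))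
            = fun t => Real.exp ((Adv P r V s a + (t - V s₀) * c s a) / α) := by
          funext t; rw [hAdv]
        rw [h1]
        have h2 : HasDerivAt (fun t : ℝ => (Adv P r V s a + (t - V s₀) * c s a) / α)
            (1 * c s a / α) (V s₀) :=
          ((((hasDerivAt_id (V s₀)).sub_const (V s₀)).mul_const (c s a)).const_add
            (Adv P r V s a)).div_const α
        have h3 := h2.exp
        simpa using h3
      have hupd : Function.update V s₀ (V s₀) = V := Function.update_eq_self s₀ V
      have h4 := hsum.rpow_const (p := α/β)
        (Or.inl (by rw [hupd]; exact ne_of_gt (hEpos V s)))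
      rw [hupd] at h4
      exact h4
    have hlog := hZ.log (by
      rw [Function.update_eq_self]; exact ne_of_gt (hZpos V))
    rw [Function.update_eq_self] at hlog
    rw [hlog.deriv]
    -- algebra
    rw [div_eq_inv_mul, Finset.mul_sum]
    have hα' : α ≠ 0 := ne_of_gt hα
    have hβ' : β ≠ 0 := ne_of_gt hβ
    have hswap : ∀ s : S, (Zfun P r α β V)⁻¹ *
        ((∑ a, Real.exp (Adv P r V s a / α) * (c s a / α)) * (α/β) *
          (∑ a, Real.exp (Adv P r V s a / α)) ^ (α/β - 1))
        = ∑ a, β⁻¹ * (pV s a * c s a) := by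
      intro s
      rw [Finset.sum_mul, Finset.sum_mul, Finset.mul_sum]
      apply Finset.sum_congr rfl
      intro a _
      rw [hpV]
      field_simp
    rw [Finset.sum_congr rfl (fun s _ => hswap s)]
    simp only [← Finset.mul_sum]
    congr 1
    have expand : ∀ s a, pV s a * c s a
        = P s a s₀ * pV s a - (if s = s₀ then pV s a else 0) := by
      intro s a
      rw [hc]
      by_cases h : s = s₀ <;> simp [h] <;> ring
    rw [Finset.sum_congr rfl (fun s _ =>
      Finset.sum_congr rfl (fun a _ => expand s a))]
    simp only [Finset.sum_sub_distrib]
    congr 1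
    have hite : ∀ s : S, (∑ a, if s = s₀ then pV s a else 0)
        = if s = s₀ then ∑ a, pV s a else 0 := by
      intro s; split <;> simp
    rw [Finset.sum_congr rfl (fun s _ => hite s),
      Finset.sum_ite_eq' Finset.univ s₀ (fun s => ∑ a, pV s a)]
    simp
  constructor
  · intro h s'
    have h0 := (key s').symm.trans (h s')
    have := mul_eq_zero.mp h0
    rcases this with h1 | h1
    · exact absurd h1 (inv_ne_zero (ne_of_gt hβ))
    · linarith [sub_eq_zero.mp h1]
  · intro h s
    rw [key s, h s, sub_self, mul_zero]
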